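/- Let K ⊆ L ⊆ M be a tower of local fields with M/K finite Galois, L/K finite, G = Gal(M/K), H = Gal(M/L). Then for every w ∈ ℝ_{≥0}, G^w ∩ H ≤ H^w, where G^w and H^w are the upper-numbering ramification groups. -/

import Mathlib

/-- The positive generator of the value group of `w`. -/
noncomputable def vgap {Ω : Type*} [Field Ω] (w : Ω → WithTop ℝ) : ℝ :=
  sInf {r : ℝ | 0 < r ∧ ∃ x : Ω, w x = (r : WithTop ℝ)}

/-- Lower-numbering ramification set `G_u` of `Gal(Ω/F)`. -/
def lowerRG (F : Type*) {Ω : Type*} [Field F] [Field Ω] [Algebra F Ω]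
    (w : Ω → WithTop ℝ) (u : ℝ) : Set (Ω ≃ₐ[F] Ω) :=
  {σ | ∀ x : Ω, (0 : ℝ) ≤ w x → (((u + 1) * vgap w : ℝ) : WithTop ℝ) ≤ w (σ x - x)}

/-- Herbrand function `φ(u) = ∫₀ᵘ dt / (G₀ : G_t)`. -/
noncomputable def herbrand (F : Type*) {Ω : Type*} [Field F] [Field Ω] [Algebra F Ω]
    (w : Ω → WithTop ℝ) (u : ℝ) : ℝ :=
  ∫ t in (0:ℝ)..u,
    (Nat.card (lowerRG F w t) : ℝ) / (Nat.card (lowerRG F w 0) : ℝ)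

/-- Upper-numbering ramification set `G^v = G_{ψ(v)}`. -/
noncomputable def upperRG (F : Type*) {Ω : Type*} [Field F] [Field Ω] [Algebra F Ω]
    (w : Ω → WithTop ℝ) (v : ℝ) : Set (Ω ≃ₐ[F] Ω) :=
  lowerRG F w (sInf {u : ℝ | 0 ≤ u ∧ v ≤ herbrand F w u})

section Aux


variable {K M : Type*} [Field K] [Field M] [Algebra K M]
variable (w : M → WithTop ℝ)

lemma my_wneg (hw1 : w 1 = 0) (hmul : ∀ x y : M, w (x * y) = w x + w y) (x : M) :
    w (-x) = w x := by
  have h1 : w (-1 : M) + w (-1 : M) = 0 := by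
    rw [← hmul]; norm_num [hw1]
  have h2 : w (-1 : M) = 0 := by
    cases h : w (-1 : M) with
    | top => rw [h] at h1; simp at h1
    | coe r =>
      rw [h, ← WithTop.coe_add] at h1
      have : r + r = 0 := by exact_mod_cast h1
      have : r = 0 := by linarith
      exact_mod_cast this
  have : (-x : M) = (-1) * x := by ring
  rw [this, hmul, h2, zero_add]

lemma lowerRG_anti (F : Type*) [Field F] [Algebra F M] (hgap : 0 < vgap w) {t u : ℝ}
    (h : t ≤ u) : lowerRG F w u ⊆ lowerRG F w t := by
  intro σ hσ x hx
  refine le_trans ?_ (hσ x hx)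
  have : (t + 1) * vgap w ≤ (u + 1) * vgap w :=
    mul_le_mul_of_nonneg_right (by linarith) hgap.le
  exact_mod_cast this

/-- The lower ramification set as a subgroup. -/
def rgSubgroup (hw0 : w 0 = ⊤) (hw1 : w 1 = 0)
    (hmul : ∀ x y : M, w (x * y) = w x + w y)
    (hadd : ∀ x y : M, min (w x) (w y) ≤ w (x + y))
    (hGal : ∀ σ : M ≃ₐ[K] M, ∀ x : M, w (σ x) = w x) (t : ℝ) :
    Subgroup (M ≃ₐ[K] M) where
  carrier := lowerRG K w t
  one_mem' := by
    intro x _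
    simp only [AlgEquiv.one_apply, sub_self, hw0]
    exact le_top
  mul_mem' := by
    intro σ τ hσ hτ x hx
    have h1 : (0 : ℝ) ≤ w (τ x) := by rw [hGal τ x]; exact hx
    have key : (σ * τ) x - x = (σ (τ x) - τ x) + (τ x - x) := by
      rw [AlgEquiv.mul_apply]; ring
    rw [key]
    exact le_trans (le_min (hσ (τ x) h1) (hτ x hx)) (hadd _ _)
  inv_mem' := by
    intro σ hσ x hx
    have h2 : σ (σ⁻¹ x - x) = x - σ x := by
      show σ (σ.symm x - x) = x - σ x
      rw [map_sub, AlgEquiv.apply_symm_apply]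
    have h3 : w (σ⁻¹ x - x) = w (σ x - x) := by
      have h4 := hGal σ (σ⁻¹ x - x)
      rw [h2] at h4
      rw [← h4, show x - σ x = -(σ x - x) by ring, my_wneg w hw1 hmul]
    show ((t + 1) * vgap w : ℝ) ≤ (w (σ⁻¹ x - x) : WithTop ℝ)
    rw [h3]
    exact hσ x hx

lemma card_ineq {Γ : Type*} [Group Γ] [Finite Γ] (A Gs G0 : Subgroup Γ)
    (hAG : A ≤ G0) (hsG : Gs ≤ G0) :
    Nat.card A * Nat.card Gs ≤ Nat.card (A ⊓ Gs : Subgroup Γ) * Nat.card G0 := by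
  have hA : Nat.card (Gs.subgroupOf A) * (Gs.subgroupOf A).index = Nat.card A :=
    Subgroup.card_mul_index _
  have hG : Nat.card (Gs.subgroupOf G0) * (Gs.subgroupOf G0).index = Nat.card G0 :=
    Subgroup.card_mul_index _
  have e1 : Nat.card (Gs.subgroupOf A) = Nat.card (A ⊓ Gs : Subgroup Γ) := by
    rw [← Subgroup.inf_subgroupOf_left Gs A]
    exact Nat.card_congr (Subgroup.subgroupOfEquivOfLe inf_le_left).toEquiv
  have e2 : Nat.card (Gs.subgroupOf G0) = Nat.card Gs :=
    Nat.card_congr (Subgroup.subgroupOfEquivOfLe hsG).toEquiv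
  have hne : Gs.relIndex G0 ≠ 0 := Subgroup.index_ne_zero_of_finite
  have hle : (Gs.subgroupOf A).index ≤ (Gs.subgroupOf G0).index :=
    Subgroup.relIndex_le_of_le_right hAG hne
  calc Nat.card A * Nat.card Gs
      = Nat.card (A ⊓ Gs : Subgroup Γ) * ((Gs.subgroupOf A).index * Nat.card Gs) := by
        rw [← hA, e1]; ring
    _ ≤ Nat.card (A ⊓ Gs : Subgroup Γ) * ((Gs.subgroupOf G0).index * Nat.card Gs) :=
        Nat.mul_le_mul_left _ (Nat.mul_le_mul_right _ hle)
    _ = Nat.card (A ⊓ Gs : Subgroup Γ) * Nat.card G0 := by rw [← hG, e2]; ring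

end Aux

section Main


variable {K L M : Type*} [Field K] [Field L] [Field M]
    [Algebra K L] [Algebra L M] [Algebra K M] [IsScalarTower K L M]

/-- Restriction of scalars as a monoid hom between automorphism groups. -/
def resHom : (M ≃ₐ[L] M) →* (M ≃ₐ[K] M) where
  toFun := AlgEquiv.restrictScalars K
  map_one' := by ext x; rfl
  map_mul' _ _ := by ext x; rfl

lemma mem_lowerRG_iff (w : M → WithTop ℝ) (t : ℝ) (σ : M ≃ₐ[L] M) :
    σ ∈ lowerRG L w t ↔ (AlgEquiv.restrictScalars (R := K) σ) ∈ lowerRG K w t := Iff.rfl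

lemma card_lowerRG_L (w : M → WithTop ℝ) (t : ℝ) (Gt : Subgroup (M ≃ₐ[K] M))
    (hGt : ∀ g, g ∈ Gt ↔ g ∈ lowerRG K w t) :
    Nat.card (lowerRG L w t)
      = Nat.card ((resHom (K := K) (L := L) (M := M)).range ⊓ Gt : Subgroup (M ≃ₐ[K] M)) := by
  apply Nat.card_congr
  refine Equiv.ofBijective
    (fun σ => ⟨AlgEquiv.restrictScalars K σ.1,
      Subgroup.mem_inf.mpr ⟨⟨σ.1, rfl⟩, (hGt _).mpr ((mem_lowerRG_iff w t σ.1).mp σ.2)⟩⟩)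
    ⟨?_, ?_⟩
  · intro a b h
    exact Subtype.ext (AlgEquiv.restrictScalars_injective K (Subtype.ext_iff.mp h))
  · rintro ⟨g, hg⟩
    obtain ⟨⟨σ, rfl⟩, hg2⟩ := Subgroup.mem_inf.mp hg
    exact ⟨⟨σ, (mem_lowerRG_iff w t σ).mpr ((hGt _).mp hg2)⟩, rfl⟩

end Main

/-- Let `K ⊆ L ⊆ M` be a tower of local fields with `M/K` finite Galois and
`G = Gal(M/K)`, `H = Gal(M/L)`.  Then `G^w ∩ H ≤ H^w` for every `w ≥ 0`. -/
theorem upper_numbering_subgroup_compat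
    {K L M : Type*} [Field K] [Field L] [Field M]
    [Algebra K L] [Algebra L M] [Algebra K M] [IsScalarTower K L M]
    [FiniteDimensional K M] [IsGalois K M]
    (w : M → WithTop ℝ)
    (hw0 : w 0 = ⊤) (hw1 : w 1 = 0)
    (hmul : ∀ x y : M, w (x * y) = w x + w y)
    (hadd : ∀ x y : M, min (w x) (w y) ≤ w (x + y))
    (hdisc : ∀ x : M, x ≠ 0 → ∃ n : ℤ, w x = ((n : ℝ) * vgap w : ℝ))
    (hgap : 0 < vgap w)
    (hGal : ∀ σ : M ≃ₐ[K] M, ∀ x : M, w (σ x) = w x) :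
    ∀ u : ℝ, 0 ≤ u → ∀ σ : M ≃ₐ[L] M,
      (AlgEquiv.restrictScalars (R := K) σ) ∈ upperRG K w u →
      σ ∈ upperRG L w u := by
  intro u hu σ hσ
  classical
  letI : Fintype (M ≃ₐ[K] M) := AlgEquiv.fintype K M
  haveI : FiniteDimensional L M := FiniteDimensional.right K L M
  letI : Fintype (M ≃ₐ[L] M) := AlgEquiv.fintype L M
  set Gt : ℝ → Subgroup (M ≃ₐ[K] M) := fun t => rgSubgroup w hw0 hw1 hmul hadd hGal t
    with hGtdef
  have hGtmem : ∀ t : ℝ, ∀ g, g ∈ Gt t ↔ g ∈ lowerRG K w t := fun _ _ => Iff.rfl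
  set H : Subgroup (M ≃ₐ[K] M) := (resHom (K := K) (L := L) (M := M)).range with hH
  -- card identifications
  have cK : ∀ t : ℝ, Nat.card (lowerRG K w t) = Nat.card (Gt t) := fun t => rfl
  have cL : ∀ t : ℝ, Nat.card (lowerRG L w t) = Nat.card (H ⊓ Gt t : Subgroup (M ≃ₐ[K] M)) :=
    fun t => card_lowerRG_L w t (Gt t) (hGtmem t)
  -- monotonicity of the subgroups
  have hmono : ∀ {s t : ℝ}, s ≤ t → Gt t ≤ Gt s := by
    intro s t hst g hg
    exact lowerRG_anti w K hgap hst hg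
  -- positivity of cards
  have posK : ∀ t : ℝ, 0 < Nat.card (Gt t) := fun t => Nat.card_pos
  have posL : ∀ t : ℝ, 0 < Nat.card (H ⊓ Gt t : Subgroup (M ≃ₐ[K] M)) := fun t => Nat.card_pos
  -- the key counting inequality
  have keynum : ∀ s : ℝ, 0 ≤ s →
      Nat.card (H ⊓ Gt 0 : Subgroup (M ≃ₐ[K] M)) * Nat.card (Gt s)
        ≤ Nat.card (H ⊓ Gt s : Subgroup (M ≃ₐ[K] M)) * Nat.card (Gt 0) := by
    intro s hs
    have hsub : Gt s ≤ Gt 0 := hmono hs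
    have h1 := card_ineq (H ⊓ Gt 0) (Gt s) (Gt 0) inf_le_right hsub
    have h2 : (H ⊓ Gt 0) ⊓ Gt s = H ⊓ Gt s := by
      rw [inf_assoc, inf_eq_right.mpr hsub]
    rwa [h2] at h1
  -- integrands
  set fK : ℝ → ℝ := fun s =>
    (Nat.card (lowerRG K w s) : ℝ) / (Nat.card (lowerRG K w 0) : ℝ) with hfK
  set fL : ℝ → ℝ := fun s =>
    (Nat.card (lowerRG L w s) : ℝ) / (Nat.card (lowerRG L w 0) : ℝ) with hfL
  have cardKanti : ∀ {s t : ℝ}, s ≤ t →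
      Nat.card (lowerRG K w t) ≤ Nat.card (lowerRG K w s) := by
    intro s t hst
    exact Nat.card_mono (Set.toFinite _) (lowerRG_anti w K hgap hst)
  have cardLanti : ∀ {s t : ℝ}, s ≤ t →
      Nat.card (lowerRG L w t) ≤ Nat.card (lowerRG L w s) := by
    intro s t hst
    exact Nat.card_mono (Set.toFinite _) (lowerRG_anti w L hgap hst)
  have pK : ∀ t : ℝ, (0:ℝ) < (Nat.card (lowerRG K w t) : ℝ) := by
    intro t
    have : 0 < Nat.card (lowerRG K w t) := by rw [cK t]; exact posK t
    exact_mod_cast this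
  have pL : ∀ t : ℝ, (0:ℝ) < (Nat.card (lowerRG L w t) : ℝ) := by
    intro t
    have : 0 < Nat.card (lowerRG L w t) := by rw [cL t]; exact posL t
    exact_mod_cast this
  have antiK : Antitone fK := by
    intro s t hst
    have h := cardKanti hst
    simp only [hfK]
    have h' : (Nat.card (lowerRG K w t) : ℝ) ≤ (Nat.card (lowerRG K w s) : ℝ) := by
      exact_mod_cast h
    gcongr
  have antiL : Antitone fL := by
    intro s t hst
    have h := cardLanti hst
    simp only [hfL]
    have h' : (Nat.card (lowerRG L w t) : ℝ) ≤ (Nat.card (lowerRG L w s) : ℝ) := by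
      exact_mod_cast h
    gcongr
  -- pointwise comparison of the integrands on [0, t]
  have hpt : ∀ s : ℝ, 0 ≤ s → fK s ≤ fL s := by
    intro s hs
    simp only [hfK, hfL]
    rw [div_le_div_iff₀ (pK 0) (pL 0)]
    rw [cK s, cK 0, cL s, cL 0]
    have hn : ((Nat.card (H ⊓ Gt 0 : Subgroup (M ≃ₐ[K] M)) * Nat.card (Gt s) : ℕ) : ℝ)
        ≤ ((Nat.card (H ⊓ Gt s : Subgroup (M ≃ₐ[K] M)) * Nat.card (Gt 0) : ℕ) : ℝ) :=
      Nat.cast_le.mpr (keynum s hs)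
    push_cast at hn ⊢
    nlinarith [hn]
  -- herbrand comparison
  have hherb : ∀ t : ℝ, 0 ≤ t → herbrand K w t ≤ herbrand L w t := by
    intro t ht
    apply intervalIntegral.integral_mono_on ht antiK.intervalIntegrable
      antiL.intervalIntegrable
    intro s hs
    exact hpt s hs.1
  -- lower bound for herbrand K
  have hlb : ∀ t : ℝ, 0 ≤ t →
      t / (Nat.card (lowerRG K w 0) : ℝ) ≤ herbrand K w t := by
    intro t ht
    have h1 : ∀ s ∈ Set.Icc (0:ℝ) t,
        (1 : ℝ) / (Nat.card (lowerRG K w 0) : ℝ) ≤ fK s := by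
      intro s _
      simp only [hfK]
      have h1card : (1:ℝ) ≤ (Nat.card (lowerRG K w s) : ℝ) := by
        have : 0 < Nat.card (lowerRG K w s) := by rw [cK s]; exact posK s
        exact_mod_cast this
      gcongr
    have h2 := intervalIntegral.integral_mono_on ht (intervalIntegrable_const (μ := MeasureTheory.volume))
      antiK.intervalIntegrable h1
    rw [intervalIntegral.integral_const, smul_eq_mul] at h2
    calc t / (Nat.card (lowerRG K w 0) : ℝ)
        = (t - 0) * ((1:ℝ) / (Nat.card (lowerRG K w 0) : ℝ)) := by ring
      _ ≤ herbrand K w t := h2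
  -- the two psi sets
  set SK := {t : ℝ | 0 ≤ t ∧ u ≤ herbrand K w t} with hSK
  set SL := {t : ℝ | 0 ≤ t ∧ u ≤ herbrand L w t} with hSL
  have hc0pos : (0:ℝ) < (Nat.card (lowerRG K w 0) : ℝ) := pK 0
  have hSKne : SK.Nonempty := by
    refine ⟨u * (Nat.card (lowerRG K w 0) : ℝ), ?_, ?_⟩
    · positivity
    · refine le_trans ?_ (hlb _ (by positivity))
      rw [mul_div_assoc, div_self hc0pos.ne']
      simp
  have hsub : SK ⊆ SL := by
    rintro t ⟨ht, hut⟩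
    exact ⟨ht, hut.trans (hherb t ht)⟩
  have hbdd : BddBelow SL := ⟨0, fun x hx => hx.1⟩
  have hle : sInf SL ≤ sInf SK := csInf_le_csInf hbdd hSKne hsub
  -- finish
  have : (AlgEquiv.restrictScalars (R := K) σ) ∈ lowerRG K w (sInf SL) :=
    lowerRG_anti w K hgap hle hσ
  exact (mem_lowerRG_iff w (sInf SL) σ).mpr this
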